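/- Let a profile have an even number 2k of voters (k ≥ 1) over at least two alternatives, suppose exactly k voters rank alternative a last, and suppose all remaining k voters rank a first. Then every pairwise majority contest between a and another alternative is a tie, hence a is among the winners of Condorcet's method; consequently, Condorcet's method produces social disappointment at such a profile (a winning alternative is ranked last by at least half of the voters). -/

import Mathlib

open Finset

attribute [local instance] Classical.propDecidable

noncomputable section

/-- A preference profile for `n` voters: each voter has a ballot, a list of
alternatives ordered from most preferred (head) to least preferred (last). -/
abbrev Profile (n : ℕ) (A : Type*) := Fin n → List A

variable {A : Type*} [DecidableEq A]

/-- A valid profile: every ballot is a strict linear order on the alternatives,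
i.e. a duplicate-free list containing every alternative. -/
def IsProfile {n : ℕ} (P : Profile n A) : Prop :=
  ∀ i, (P i).Nodup ∧ ∀ a : A, a ∈ P i

/-- The voter with ballot `l` prefers `x` to `y`. -/
def Prefers (l : List A) (x y : A) : Prop := l.idxOf x < l.idxOf y

/-- The number of voters who rank `a` last (at the bottom of their list). -/
def lastCount {n : ℕ} (P : Profile n A) (a : A) : ℕ :=
  (univ.filter fun i => (P i).getLast? = some a).card

/-- The number of voters who rank `a` first (at the top of their list). -/
def firstCount {n : ℕ} (P : Profile n A) (a : A) : ℕ :=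
  (univ.filter fun i => (P i).head? = some a).card

/-- The number of voters preferring `x` to `y`. -/
def prefCount {n : ℕ} (P : Profile n A) (x y : A) : ℕ :=
  (univ.filter fun i => Prefers (P i) x y).card

/-- `x` defeats `y` in a pairwise majority contest: strictly more voters
prefer `x` to `y` than prefer `y` to `x`. -/
def Defeats {n : ℕ} (P : Profile n A) (x y : A) : Prop :=
  prefCount P y x < prefCount P x y

/-- Condorcet's method: the winners are the alternatives defeated by no other alternative. -/
def CondorcetWinners {n : ℕ} (P : Profile n A) : Set A :=
  {a | ∀ b, ¬ Defeats P b a}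

/-- `a` is a Condorcet winner: it is the unique winner of Condorcet's method. -/
def IsCondorcetWinner {n : ℕ} (P : Profile n A) (a : A) : Prop :=
  CondorcetWinners P = {a}


lemma indexOf_of_getLast? {l : List A} (hn : l.Nodup) {a : A} (ha : l.getLast? = some a) :
    l.idxOf a = l.length - 1 := by
  obtain ⟨hne, heq⟩ := List.mem_getLast?_eq_getLast (show a ∈ l.getLast? from ha)
  have hmem : a ∈ l := heq ▸ List.getLast_mem hne
  have hlt : l.idxOf a < l.length := List.idxOf_lt_length_iff.mpr hmem
  have hlen : 0 < l.length := List.length_pos_iff.mpr hne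
  have h1 : l[l.length - 1]'(by omega) = a := by
    rw [← List.getLast_eq_getElem hne]; exact heq.symm
  have h2 : l[l.idxOf a]'hlt = a := List.getElem_idxOf hlt
  exact hn.getElem_inj_iff.mp (h2.trans h1.symm)

lemma prefers_of_getLast? {l : List A} (hn : l.Nodup) {a b : A} (ha : l.getLast? = some a)
    (hb : b ∈ l) (hne : b ≠ a) : Prefers l b a := by
  obtain ⟨hnil, heq⟩ := List.mem_getLast?_eq_getLast (show a ∈ l.getLast? from ha)
  have hma : a ∈ l := heq ▸ List.getLast_mem hnil
  have hia := indexOf_of_getLast? hn ha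
  have hlt : l.idxOf b < l.length := List.idxOf_lt_length_iff.mpr hb
  have hne' : l.idxOf b ≠ l.idxOf a := by
    intro h
    apply hne
    have h2 : l[l.idxOf b]'hlt = b := List.getElem_idxOf hlt
    have h3 : l[l.idxOf a]'(List.idxOf_lt_length_iff.mpr hma) = a :=
      List.getElem_idxOf (List.idxOf_lt_length_iff.mpr hma)
    simp only [h] at h2
    exact h2.symm.trans h3
  unfold Prefers
  omega

lemma prefers_of_head? {l : List A} {a b : A} (ha : l.head? = some a)
    (hb : b ∈ l) (hne : b ≠ a) : Prefers l a b := by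
  cases l with
  | nil => simp at ha
  | cons x t =>
    obtain rfl : x = a := by simpa using ha
    unfold Prefers
    rw [List.idxOf_cons_self, List.idxOf_cons_ne _ (Ne.symm hne)]
    omega

/-- with `2k` voters (`k ≥ 1`), if exactly `k` voters rank `a` last
and all remaining `k` voters rank `a` first, then every pairwise contest between
`a` and another alternative is a tie, hence `a` is among the winners of
Condorcet's method; consequently Condorcet's method produces social
disappointment at such a profile. -/
theorem half_last_half_first_ties {A : Type*} [Fintype A] [DecidableEq A]
    (hA : 2 ≤ Fintype.card A) {k : ℕ} (hk : 1 ≤ k)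
    (P : Profile (2 * k) A) (hP : IsProfile P)
    (a : A) (hlast : lastCount P a = k)
    (hfirst : ∀ i, (P i).getLast? ≠ some a → (P i).head? = some a) :
    (∀ b, b ≠ a → prefCount P a b = prefCount P b a) ∧
    a ∈ CondorcetWinners P ∧
    ∃ w ∈ CondorcetWinners P, 2 * k ≤ 2 * lastCount P w := by

  have hcard : (univ : Finset (Fin (2 * k))).card = 2 * k := by simp
  have hneg : (univ.filter fun i => ¬ (P i).getLast? = some a).card = k := by
    have := Finset.card_filter_add_card_filter_not
      (s := (univ : Finset (Fin (2 * k)))) (p := fun i => (P i).getLast? = some a)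
    have h1 : (univ.filter fun i => (P i).getLast? = some a).card = k := hlast
    omega
  have key : ∀ b : A, b ≠ a →
      prefCount P a b = k ∧ prefCount P b a = k := by
    intro b hb
    have hab : (univ.filter fun i => Prefers (P i) a b)
        = univ.filter fun i => ¬ (P i).getLast? = some a := by
      ext i
      simp only [mem_filter, mem_univ, true_and]
      constructor
      · intro hpref hlastc
        have h2 := prefers_of_getLast? (hP i).1 hlastc ((hP i).2 b) hb
        unfold Prefers at hpref h2; omega
      · intro hlastc
        exact prefers_of_head? (hfirst i hlastc) ((hP i).2 b) hb
    have hba : (univ.filter fun i => Prefers (P i) b a)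
        = univ.filter fun i => (P i).getLast? = some a := by
      ext i
      simp only [mem_filter, mem_univ, true_and]
      constructor
      · intro hpref
        by_contra hlastc
        have h2 := prefers_of_head? (hfirst i hlastc) ((hP i).2 b) hb
        unfold Prefers at hpref h2; omega
      · intro hlastc
        exact prefers_of_getLast? (hP i).1 hlastc ((hP i).2 b) hb
    constructor
    · show (univ.filter fun i => Prefers (P i) a b).card = k
      rw [hab]; exact hneg
    · show (univ.filter fun i => Prefers (P i) b a).card = k
      rw [hba]; exact hlast
  have tie : ∀ b : A, b ≠ a → prefCount P a b = prefCount P b a := by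
    intro b hb
    obtain ⟨h1, h2⟩ := key b hb
    rw [h1, h2]
  have hwin : a ∈ CondorcetWinners P := by
    intro b hdef
    unfold Defeats at hdef
    by_cases hb : b = a
    · subst hb; omega
    · obtain ⟨h1, h2⟩ := key b hb
      omega
  exact ⟨tie, hwin, a, hwin, by rw [hlast]⟩
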